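/- Let (A,B,C,D) define a system Σ and let (Π'_max, H'_max, Λ'_max) be a maximal solution of the left zero equation [Π', H']·[[A,B],[C,D]] = [Λ'Π', 0] (maximal with respect to the row space of Π'). Then ker Π'_max = C*(Σ), the set of states reachable from the origin by a finite input sequence producing identically zero output. -/

import Mathlib

open Matrix

noncomputable section

/-- Map a complex matrix entrywise to rational functions. -/
def mc {a b : ℕ} (M : Matrix (Fin a) (Fin b) ℂ) : Matrix (Fin a) (Fin b) (RatFunc ℂ) :=
  M.map (⇑(RatFunc.C : ℂ →+* RatFunc ℂ))

/-- The resolvent `(z I − M)⁻¹` as a matrix of rational functions. -/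
def res {a : ℕ} (M : Matrix (Fin a) (Fin a) ℂ) : Matrix (Fin a) (Fin a) (RatFunc ℂ) :=
  ((Matrix.scalar (Fin a) (RatFunc.X : RatFunc ℂ)) - mc M)⁻¹

/-- The "anti-resolvent" `(z I + M)⁻¹`, used for para-hermitian conjugates. -/
def resneg {a : ℕ} (M : Matrix (Fin a) (Fin a) ℂ) : Matrix (Fin a) (Fin a) (RatFunc ℂ) :=
  ((Matrix.scalar (Fin a) (RatFunc.X : RatFunc ℂ)) + mc M)⁻¹

/-- Observability of a pair `(C, A)`. -/
def Observable {p n : ℕ} (C : Matrix (Fin p) (Fin n) ℂ) (A : Matrix (Fin n) (Fin n) ℂ) : Prop :=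
  ∀ v : Fin n → ℂ, (∀ k : ℕ, C *ᵥ ((A ^ k) *ᵥ v) = 0) → v = 0

/-- Controllability of a pair `(Λ, G)`. -/
def Controllable {r m : ℕ} (L : Matrix (Fin r) (Fin r) ℂ) (G : Matrix (Fin r) (Fin m) ℂ) : Prop :=
  ∀ y : Fin r → ℂ, (∀ k : ℕ, y ᵥ* ((L ^ k) * G) = 0) → y = 0

/-- The range (column space) of a matrix, as a submodule of `ℂⁿ`. -/
def mrange {a b : ℕ} (M : Matrix (Fin a) (Fin b) ℂ) : Submodule ℂ (Fin a → ℂ) :=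
  LinearMap.range M.mulVecLin

/-- The set of states reachable from the origin by a finite input sequence
producing identically zero output along the way (the minimal input-containing
subspace `C*(Σ)`). -/
def OutNullReach {n p q : ℕ} (A : Matrix (Fin n) (Fin n) ℂ) (B : Matrix (Fin n) (Fin q) ℂ)
    (C : Matrix (Fin p) (Fin n) ℂ) (D : Matrix (Fin p) (Fin q) ℂ) (x : Fin n → ℂ) : Prop :=
  ∃ (j : ℕ) (ξ : ℕ → (Fin n → ℂ)) (u : ℕ → (Fin q → ℂ)),
    ξ 0 = 0 ∧ (∀ i < j, ξ (i + 1) = A *ᵥ ξ i + B *ᵥ u i ∧ C *ᵥ ξ i + D *ᵥ u i = 0) ∧ ξ j = x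

namespace Stmt14Aux

variable {n p q : ℕ} (A : Matrix (Fin n) (Fin n) ℂ) (B : Matrix (Fin n) (Fin q) ℂ)
  (C : Matrix (Fin p) (Fin n) ℂ) (D : Matrix (Fin p) (Fin q) ℂ)

/-- reachable with a zero-output trajectory of length exactly j -/
def N (j : ℕ) (x : Fin n → ℂ) : Prop :=
  ∃ (ξ : ℕ → (Fin n → ℂ)) (u : ℕ → (Fin q → ℂ)),
    ξ 0 = 0 ∧ (∀ i < j, ξ (i + 1) = A *ᵥ ξ i + B *ᵥ u i ∧ C *ᵥ ξ i + D *ᵥ u i = 0) ∧ ξ j = x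

lemma onr_iff (x : Fin n → ℂ) : OutNullReach A B C D x ↔ ∃ j, N A B C D j x := Iff.rfl

lemma N_succ {j : ℕ} {x : Fin n → ℂ} (hx : N A B C D j x) : N A B C D (j+1) x := by
  obtain ⟨ξ, u, h0, hs, hj⟩ := hx
  refine ⟨fun i => ξ (i-1), fun i => if i = 0 then 0 else u (i-1), by simpa using h0, ?_,
    by simpa using hj⟩
  intro i hi
  match i with
  | 0 => simp [h0, Matrix.mulVec_zero]
  | Nat.succ k =>
    have := hs k (by omega)
    simpa using this

lemma N_mono {j j' : ℕ} (h : j ≤ j') {x : Fin n → ℂ} (hx : N A B C D j x) :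
    N A B C D j' x := by
  induction j' with
  | zero =>
    have : j = 0 := by omega
    exact this ▸ hx
  | succ m ih =>
    rcases Nat.lt_or_ge j (m+1) with h' | h'
    · exact N_succ A B C D (ih (by omega))
    · have : j = m + 1 := by omega
      exact this ▸ hx

lemma N_add {j : ℕ} {x y : Fin n → ℂ} (hx : N A B C D j x) (hy : N A B C D j y) :
    N A B C D j (x + y) := by
  obtain ⟨ξ1, u1, h01, hs1, hj1⟩ := hx
  obtain ⟨ξ2, u2, h02, hs2, hj2⟩ := hy
  refine ⟨fun i => ξ1 i + ξ2 i, fun i => u1 i + u2 i, by simp [h01, h02], ?_,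
    by simp [hj1, hj2]⟩
  intro i hi
  obtain ⟨e1, o1⟩ := hs1 i hi
  obtain ⟨e2, o2⟩ := hs2 i hi
  constructor
  · show ξ1 (i+1) + ξ2 (i+1) = A *ᵥ (ξ1 i + ξ2 i) + B *ᵥ (u1 i + u2 i)
    rw [e1, e2]; simp only [Matrix.mulVec_add]; abel
  · show C *ᵥ (ξ1 i + ξ2 i) + D *ᵥ (u1 i + u2 i) = 0
    have h : (C *ᵥ ξ1 i + D *ᵥ u1 i) + (C *ᵥ ξ2 i + D *ᵥ u2 i) = 0 := by rw [o1, o2]; simp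
    rw [← h]; simp only [Matrix.mulVec_add]; abel

lemma N_smul {j : ℕ} {x : Fin n → ℂ} (c : ℂ) (hx : N A B C D j x) :
    N A B C D j (c • x) := by
  obtain ⟨ξ, u, h0, hs, hj⟩ := hx
  refine ⟨fun i => c • ξ i, fun i => c • u i, by simp [h0], ?_, by simp [hj]⟩
  intro i hi
  obtain ⟨e, o⟩ := hs i hi
  constructor
  · show c • ξ (i+1) = A *ᵥ (c • ξ i) + B *ᵥ (c • u i)
    rw [e]; simp [Matrix.mulVec_smul, smul_add]
  · show C *ᵥ (c • ξ i) + D *ᵥ (c • u i) = 0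
    rw [Matrix.mulVec_smul, Matrix.mulVec_smul, ← smul_add, o]; simp

/-- `C*(Σ)` as a submodule. -/
def Vsub : Submodule ℂ (Fin n → ℂ) where
  carrier := {x | OutNullReach A B C D x}
  zero_mem' := ⟨0, fun _ => 0, fun _ => 0, rfl, by simp, rfl⟩
  add_mem' := by
    rintro x y ⟨j1, hx⟩ ⟨j2, hy⟩
    exact ⟨max j1 j2, N_add A B C D (N_mono A B C D (le_max_left _ _) hx)
      (N_mono A B C D (le_max_right _ _) hy)⟩
  smul_mem' := by
    rintro c x ⟨j, hx⟩
    exact ⟨j, N_smul A B C D c hx⟩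

lemma mem_Vsub (x : Fin n → ℂ) : x ∈ Vsub A B C D ↔ OutNullReach A B C D x := Iff.rfl

lemma step_mem {x : Fin n → ℂ} (hx : x ∈ Vsub A B C D) (u : Fin q → ℂ)
    (hu : C *ᵥ x + D *ᵥ u = 0) : A *ᵥ x + B *ᵥ u ∈ Vsub A B C D := by
  obtain ⟨j, ξ, uu, h0, hs, hj⟩ := hx
  refine ⟨j + 1, fun i => if i = j+1 then A *ᵥ x + B *ᵥ u else ξ i,
    fun i => if i = j then u else uu i, by simp [h0], ?_, by simp⟩
  intro i hi
  rcases Nat.lt_or_ge i j with h' | h'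
  · have e1 : i ≠ j + 1 := by omega
    have e2 : i + 1 ≠ j + 1 := by omega
    have e3 : i ≠ j := by omega
    simp only [e1, e2, e3, if_false]
    exact hs i h'
  · have e : i = j := by omega
    subst e
    simp [hj, hu]


/-- the dot-product functional -/
def dotL {n : ℕ} (w : Fin n → ℂ) : (Fin n → ℂ) →ₗ[ℂ] ℂ where
  toFun y := w ⬝ᵥ y
  map_add' a b := dotProduct_add w a b
  map_smul' c a := by simp [dotProduct_smul]

lemma dot_eq_zero_of_forall {n : ℕ} (v : Fin n → ℂ) (h : ∀ u, v ⬝ᵥ u = 0) : v = 0 := by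
  funext k
  have := h (Pi.single k 1)
  simpa [dotProduct_single] using this

/-- functional factoring: if ker T ≤ ker φ then φ = ψ ∘ T for some ψ. -/
lemma exists_factor {M : Type*} [AddCommGroup M] [Module ℂ M] {m : ℕ}
    (T : M →ₗ[ℂ] (Fin m → ℂ)) (φ : M →ₗ[ℂ] ℂ) (h : LinearMap.ker T ≤ LinearMap.ker φ) :
    ∃ ψ : (Fin m → ℂ) →ₗ[ℂ] ℂ, ∀ z, ψ (T z) = φ z := by
  let φq : (M ⧸ LinearMap.ker T) →ₗ[ℂ] ℂ := (LinearMap.ker T).liftQ φ h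
  let e : (M ⧸ LinearMap.ker T) ≃ₗ[ℂ] LinearMap.range T := T.quotKerEquivRange
  let ψ₀ : (LinearMap.range T) →ₗ[ℂ] ℂ := φq.comp (e.symm : _ →ₗ[ℂ] _)
  obtain ⟨ψ, hψ⟩ := LinearMap.exists_extend ψ₀
  refine ⟨ψ, fun z => ?_⟩
  have h1 : ψ (T z) = ψ₀ ⟨T z, LinearMap.mem_range_self T z⟩ := by
    have := congrArg (fun f => f ⟨T z, LinearMap.mem_range_self T z⟩) hψ
    simpa using this
  rw [h1]
  show φq (e.symm ⟨T z, _⟩) = φ z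
  have h2 : e (Submodule.Quotient.mk z) = ⟨T z, LinearMap.mem_range_self T z⟩ := by
    apply Subtype.ext
    simp [e, LinearMap.quotKerEquivRange]
  rw [← h2, LinearEquiv.symm_apply_apply]
  exact Submodule.liftQ_apply _ φ z

/-- represent any functional on ℂⁿ as a dot product -/
lemma exists_dot_rep {m : ℕ} (ψ : (Fin m → ℂ) →ₗ[ℂ] ℂ) :
    ∃ h : Fin m → ℂ, ∀ y, ψ y = h ⬝ᵥ y := by
  refine ⟨fun i => ψ (fun j => if i = j then 1 else 0), fun y => ?_⟩
  rw [LinearMap.pi_apply_eq_sum_univ ψ y]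
  simp [dotProduct, mul_comm]

/-- double annihilator via dot product -/
lemma mem_of_forall_dot {m : ℕ} (V : Submodule ℂ (Fin m → ℂ)) (x : Fin m → ℂ)
    (hx : ∀ w : Fin m → ℂ, (∀ y ∈ V, w ⬝ᵥ y = 0) → w ⬝ᵥ x = 0) : x ∈ V := by
  rw [← Subspace.forall_mem_dualAnnihilator_apply_eq_zero_iff V x]
  intro φ hφ
  obtain ⟨w, hw⟩ := exists_dot_rep φ
  rw [hw]
  refine hx w (fun y hy => ?_)
  rw [← hw]
  exact (Submodule.mem_dualAnnihilator φ).mp hφ y hy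



lemma exists_h (V : Submodule ℂ (Fin n → ℂ))
    (hstep : ∀ x ∈ V, ∀ u : Fin q → ℂ, C *ᵥ x + D *ᵥ u = 0 → A *ᵥ x + B *ᵥ u ∈ V)
    (w : Fin n → ℂ) (hw : ∀ y ∈ V, w ⬝ᵥ y = 0) :
    ∃ h : Fin p → ℂ, (w ᵥ* B + h ᵥ* D = 0) ∧ ∀ x ∈ V, (w ᵥ* A + h ᵥ* C) ⬝ᵥ x = 0 := by
  set T : ((Fin q → ℂ) × V) →ₗ[ℂ] (Fin p → ℂ) :=
    D.mulVecLin.comp (LinearMap.fst ℂ _ _) +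
      C.mulVecLin.comp (V.subtype.comp (LinearMap.snd ℂ _ _)) with hT
  set φ : ((Fin q → ℂ) × V) →ₗ[ℂ] ℂ :=
    -((dotL w).comp (B.mulVecLin.comp (LinearMap.fst ℂ _ _) +
      A.mulVecLin.comp (V.subtype.comp (LinearMap.snd ℂ _ _)))) with hφ
  have hT_apply : ∀ z : (Fin q → ℂ) × V, T z = D *ᵥ z.1 + C *ᵥ (z.2 : Fin n → ℂ) := by
    intro z; simp [hT]
  have hφ_apply : ∀ z : (Fin q → ℂ) × V,
      φ z = -(w ⬝ᵥ (B *ᵥ z.1 + A *ᵥ (z.2 : Fin n → ℂ))) := by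
    intro z; simp [hφ, dotL]
  have hker : LinearMap.ker T ≤ LinearMap.ker φ := by
    intro z hz
    rw [LinearMap.mem_ker, hT_apply] at hz
    rw [LinearMap.mem_ker, hφ_apply]
    have hmem : A *ᵥ (z.2 : Fin n → ℂ) + B *ᵥ z.1 ∈ V :=
      hstep _ z.2.2 z.1 (by rw [add_comm] at hz; exact hz)
    have := hw _ hmem
    rw [add_comm] at this
    simp [this]
  obtain ⟨ψ, hψ⟩ := exists_factor T φ hker
  obtain ⟨h, hh⟩ := exists_dot_rep ψ
  refine ⟨h, ?_, ?_⟩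
  · apply dot_eq_zero_of_forall
    intro u
    have := hψ (u, 0)
    rw [hT_apply, hφ_apply, hh] at this
    simp only [Submodule.coe_zero, Matrix.mulVec_zero, add_zero] at this
    rw [add_dotProduct, dotProduct_mulVec w B u, dotProduct_mulVec h D u] at *
    -- this : (h ᵥ* D) ⬝ᵥ u = -((w ᵥ* B) ⬝ᵥ u)
    rw [this]; ring
  · intro x hx
    have := hψ (0, ⟨x, hx⟩)
    rw [hT_apply, hφ_apply, hh] at this
    simp only [Matrix.mulVec_zero, zero_add] at this
    rw [add_dotProduct, ← dotProduct_mulVec w A x, ← dotProduct_mulVec h C x]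
    rw [this]; ring



/-- annihilator of a subspace w.r.t. the dot product pairing -/
def ann {m : ℕ} (V : Submodule ℂ (Fin m → ℂ)) : Submodule ℂ (Fin m → ℂ) where
  carrier := {w | ∀ y ∈ V, w ⬝ᵥ y = 0}
  zero_mem' := by intro y _; simp
  add_mem' := by
    intro a b ha hb y hy
    rw [add_dotProduct, ha y hy, hb y hy, add_zero]
  smul_mem' := by
    intro c a ha y hy
    rw [smul_dotProduct, ha y hy, smul_zero]

end Stmt14Aux

/-- for a maximal solution of the left zero equation,
`ker Π'_max` equals the output-nulling reachable set `C*(Σ)`. -/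
theorem stmt14 {n p q s : ℕ}
    (A : Matrix (Fin n) (Fin n) ℂ) (B : Matrix (Fin n) (Fin q) ℂ)
    (C : Matrix (Fin p) (Fin n) ℂ) (D : Matrix (Fin p) (Fin q) ℂ)
    (Pm' : Matrix (Fin s) (Fin n) ℂ) (Hm' : Matrix (Fin s) (Fin p) ℂ)
    (Λm' : Matrix (Fin s) (Fin s) ℂ)
    (h1 : Pm' * A + Hm' * C = Λm' * Pm') (h2 : Pm' * B + Hm' * D = 0)
    (hmax : ∀ (t : ℕ) (P' : Matrix (Fin t) (Fin n) ℂ) (H' : Matrix (Fin t) (Fin p) ℂ)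
      (L' : Matrix (Fin t) (Fin t) ℂ),
      P' * A + H' * C = L' * P' → P' * B + H' * D = 0 →
      Submodule.span ℂ (Set.range fun i => P' i) ≤
        Submodule.span ℂ (Set.range fun i => Pm' i)) :
    ∀ x : Fin n → ℂ, Pm' *ᵥ x = 0 ↔ OutNullReach A B C D x := by
  intro x
  constructor
  · -- hard direction: ker Πm' ⊆ C*(Σ)
    intro hx
    set V := Stmt14Aux.Vsub A B C D with hV
    set W := Stmt14Aux.ann V with hW
    apply Stmt14Aux.mem_of_forall_dot V x
    intro w hwann
    -- Step 1: construct a left-zero solution whose rows span W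
    set t := Module.finrank ℂ ↥W with ht
    set b : Module.Basis (Fin t) ℂ ↥W := Module.finBasis ℂ ↥W with hb
    have hbW : ∀ i : Fin t, ((b i : Fin n → ℂ)) ∈ W := fun i => (b i).2
    choose h hh1 hh2 using fun i : Fin t =>
      Stmt14Aux.exists_h A B C D V (fun y hy u hu => Stmt14Aux.step_mem A B C D hy u hu)
        (b i : Fin n → ℂ) (hbW i)
    set P' : Matrix (Fin t) (Fin n) ℂ := Matrix.of fun i => (b i : Fin n → ℂ) with hP'
    set H' : Matrix (Fin t) (Fin p) ℂ := Matrix.of fun i => h i with hH'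
    have hr : ∀ i : Fin t, ((b i : Fin n → ℂ) ᵥ* A + (h i) ᵥ* C) ∈ W := by
      intro i y hy
      exact hh2 i y hy
    set r : Fin t → ↥W := fun i => ⟨_, hr i⟩ with hrdef
    set L' : Matrix (Fin t) (Fin t) ℂ := Matrix.of fun i j => b.repr (r i) j with hL'
    have heq1 : P' * A + H' * C = L' * P' := by
      ext i k
      have hs := congrArg (fun v : ↥W => (v : Fin n → ℂ) k) (b.sum_repr (r i))
      simp only [Submodule.coe_sum, SetLike.val_smul, Finset.sum_apply, Pi.smul_apply,
        smul_eq_mul] at hs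
      have lhs : (P' * A + H' * C) i k = ((b i : Fin n → ℂ) ᵥ* A + (h i) ᵥ* C) k := by
        simp [hP', hH', Matrix.add_apply, Matrix.mul_apply, Matrix.vecMul, dotProduct]
      have rhs : (L' * P') i k = ∑ j, b.repr (r i) j * (b j : Fin n → ℂ) k := by
        simp [hL', hP', Matrix.mul_apply]
      rw [lhs, rhs, hs]
    have heq2 : P' * B + H' * D = 0 := by
      ext i k
      have := congrFun (hh1 i) k
      simp only [Pi.add_apply, Pi.zero_apply] at this
      simp only [Matrix.add_apply, Matrix.zero_apply, ← this]
      simp [hP', hH', Matrix.mul_apply, Matrix.vecMul, dotProduct]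
    have hspan := hmax t P' H' L' heq1 heq2
    -- Step 2: w ∈ W is in the span of the rows of Pm'
    have hwPm : w ∈ Submodule.span ℂ (Set.range fun i => Pm' i) := by
      apply hspan
      have hrepr := b.sum_repr ⟨w, hwann⟩
      have : w = ∑ j, b.repr ⟨w, hwann⟩ j • (b j : Fin n → ℂ) := by
        have := congrArg (fun v : ↥W => (v : Fin n → ℂ)) hrepr
        simp only [Submodule.coe_sum, SetLike.val_smul] at this
        exact this.symm
      rw [this]
      refine Submodule.sum_mem _ (fun j _ => Submodule.smul_mem _ _ ?_)
      exact Submodule.subset_span ⟨j, rfl⟩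
    -- Step 3: every element of the row span of Pm' annihilates x
    have hdot : ∀ v ∈ Submodule.span ℂ (Set.range fun i => Pm' i), v ⬝ᵥ x = 0 := by
      intro v hv
      induction hv using Submodule.span_induction with
      | mem v hv =>
        obtain ⟨i, rfl⟩ := hv
        have := congrFun hx i
        simpa [Matrix.mulVec, Pi.zero_apply] using this
      | zero => simp
      | add a c _ _ ha hc => rw [add_dotProduct, ha, hc, add_zero]
      | smul c a _ ha => rw [smul_dotProduct, ha, smul_zero]
    exact hdot w hwPm
  · -- easy direction: C*(Σ) ⊆ ker Πm'
    rintro ⟨j, ξ, u, h0, hs, hj⟩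
    have hA : Pm' * A = Λm' * Pm' - Hm' * C := eq_sub_of_add_eq h1
    have hB : Pm' * B = -(Hm' * D) := eq_neg_of_add_eq_zero_left h2
    have key : ∀ i, i ≤ j → Pm' *ᵥ ξ i = 0 := by
      intro i
      induction i with
      | zero => intro _; rw [h0, Matrix.mulVec_zero]
      | succ k ih =>
        intro hk
        have hk' : k < j := by omega
        obtain ⟨e, o⟩ := hs k hk'
        have step : Pm' *ᵥ ξ (k + 1) = (Pm' * A) *ᵥ ξ k + (Pm' * B) *ᵥ u k := by
          rw [e, Matrix.mulVec_add, Matrix.mulVec_mulVec, Matrix.mulVec_mulVec]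
        rw [step, hA, hB, Matrix.sub_mulVec, Matrix.neg_mulVec,
          ← Matrix.mulVec_mulVec, ← Matrix.mulVec_mulVec, ← Matrix.mulVec_mulVec,
          ih (by omega), Matrix.mulVec_zero]
        have hab : Hm' *ᵥ (C *ᵥ ξ k) + Hm' *ᵥ (D *ᵥ u k) = 0 := by
          rw [← Matrix.mulVec_add, o, Matrix.mulVec_zero]
        rw [zero_sub, ← neg_add, hab, neg_zero]
    rw [← hj]
    exact key j le_rfl
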